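/- arXiv:2410.19310 — 3 statements merged into one kernel-verified Lean document; each statement's English description precedes it below -/
import Mathlib

section
/- Let X, Y be finite types, p : X → ℝ≥0 a probability mass function, q : X → Y → ℝ≥0 conditional probability mass functions, u : X → Y → ℝ^d conditional vector fields. Define p_t(y) = ∑ x, q x y * p x and, for y with p_t(y) ≠ 0, v(y) = p_t(y)⁻¹ • ∑ x, (q x y * p x) • u x y. Then v(y) is the unique minimizer over w(y) of the objective ∑ y, ∑ x, (p x * q x y) * ‖w y - u x y‖² restricted to points y with p_t(y) ≠ 0; i.e., for any w : Y → ℝ^d, ∑ y, ∑ x, (p x * q x y) * ‖w y - u x y‖² ≥ ∑ y, ∑ x, (p x * q x y) * ‖v y - u x y‖², with equality iff w y = v y for all y with p_t(y) ≠ 0. -/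
open scoped BigOperators NNReal

lemma cfm_key {d : ℕ} {X : Type*} [Fintype X]
    (a : X → ℝ) (ha : ∀ x, 0 ≤ a x) (u : X → EuclideanSpace ℝ (Fin d))
    (v w : EuclideanSpace ℝ (Fin d))
    (hv : (∑ x, a x) ≠ 0 → v = (∑ x, a x)⁻¹ • ∑ x, a x • u x) :
    ∑ x, a x * ‖w - u x‖ ^ 2
      = ∑ x, a x * ‖v - u x‖ ^ 2 + (∑ x, a x) * ‖w - v‖ ^ 2 := by
  by_cases hs : (∑ x, a x) = 0
  · have hzero : ∀ x ∈ Finset.univ, a x = 0 :=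
      (Finset.sum_eq_zero_iff_of_nonneg (fun x _ => ha x)).mp hs
    simp only [hs, zero_mul, add_zero]
    refine Finset.sum_congr rfl fun x hx => ?_
    rw [hzero x hx]; ring
  · have hv' := hv hs
    have hcross : ∑ x, a x • (v - u x) = 0 := by
      have h1 : ∑ x, a x • (v - u x) = (∑ x, a x) • v - ∑ x, a x • u x := by
        simp only [smul_sub, Finset.sum_sub_distrib, ← Finset.sum_smul]
      rw [h1, hv', smul_smul, mul_inv_cancel₀ hs, one_smul, sub_self]
    have expand : ∀ x, ‖w - u x‖ ^ 2
        = ‖w - v‖ ^ 2 + 2 * inner ℝ (w - v) (v - u x) + ‖v - u x‖ ^ 2 := by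
      intro x
      have : w - u x = (w - v) + (v - u x) := by abel
      rw [this, @norm_add_sq_real]
    have : ∑ x, a x * ‖w - u x‖ ^ 2
        = ∑ x, (a x * ‖w - v‖ ^ 2 + 2 * (inner ℝ (w - v) (a x • (v - u x)) : ℝ)
            + a x * ‖v - u x‖ ^ 2) := by
      refine Finset.sum_congr rfl fun x _ => ?_
      rw [expand x, inner_smul_right]; ring
    have hc2 : ∑ x, (inner ℝ (w - v) (a x • (v - u x)) : ℝ) = 0 := by
      rw [← inner_sum, hcross, inner_zero_right]
    rw [this, Finset.sum_add_distrib, Finset.sum_add_distrib, ← Finset.sum_mul,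
      ← Finset.mul_sum, hc2, mul_zero]
    ring

theorem cfm_minimizer {d : ℕ} {X Y : Type*} [Fintype X] [Fintype Y]
    (p : X → ℝ≥0) (hp : ∑ x, p x = 1)
    (q : X → Y → ℝ≥0) (hq : ∀ x, ∑ y, q x y = 1)
    (u : X → Y → EuclideanSpace ℝ (Fin d))
    (pt : Y → ℝ) (hpt : ∀ y, pt y = ∑ x, ((q x y * p x : ℝ≥0) : ℝ))
    (v : Y → EuclideanSpace ℝ (Fin d))
    (hv : ∀ y, pt y ≠ 0 →
      v y = (pt y)⁻¹ • ∑ x, ((q x y * p x : ℝ≥0) : ℝ) • u x y)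
    (w : Y → EuclideanSpace ℝ (Fin d)) :
    (∑ y, ∑ x, ((p x * q x y : ℝ≥0) : ℝ) * ‖w y - u x y‖ ^ 2 ≥
      ∑ y, ∑ x, ((p x * q x y : ℝ≥0) : ℝ) * ‖v y - u x y‖ ^ 2) ∧
    ((∑ y, ∑ x, ((p x * q x y : ℝ≥0) : ℝ) * ‖w y - u x y‖ ^ 2 =
      ∑ y, ∑ x, ((p x * q x y : ℝ≥0) : ℝ) * ‖v y - u x y‖ ^ 2) ↔
      ∀ y, pt y ≠ 0 → w y = v y) := by
  have hpq : ∀ x y, ((p x * q x y : ℝ≥0) : ℝ) = ((q x y * p x : ℝ≥0) : ℝ) := by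
    intro x y; rw [mul_comm]
  have hptsum : ∀ y, pt y = ∑ x, ((p x * q x y : ℝ≥0) : ℝ) := by
    intro y; rw [hpt y]; exact Finset.sum_congr rfl fun x _ => (hpq x y).symm
  have key : ∀ y, ∑ x, ((p x * q x y : ℝ≥0) : ℝ) * ‖w y - u x y‖ ^ 2
      = ∑ x, ((p x * q x y : ℝ≥0) : ℝ) * ‖v y - u x y‖ ^ 2
        + pt y * ‖w y - v y‖ ^ 2 := by
    intro y
    have hk := cfm_key (fun x => ((p x * q x y : ℝ≥0) : ℝ))
      (fun x => (p x * q x y).coe_nonneg) (fun x => u x y) (v y) (w y)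
      (by
        intro hs
        have hpty : pt y ≠ 0 := by rw [hptsum y]; exact hs
        rw [hv y hpty, hptsum y]
        congr 1
        exact Finset.sum_congr rfl fun x _ => by simp [hpq x y])
    rw [hptsum y]
    exact hk
  have hptnn : ∀ y, 0 ≤ pt y := by
    intro y; rw [hpt y]
    exact Finset.sum_nonneg fun x _ => (q x y * p x).coe_nonneg
  have total : ∑ y, ∑ x, ((p x * q x y : ℝ≥0) : ℝ) * ‖w y - u x y‖ ^ 2
      = ∑ y, ∑ x, ((p x * q x y : ℝ≥0) : ℝ) * ‖v y - u x y‖ ^ 2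
        + ∑ y, pt y * ‖w y - v y‖ ^ 2 := by
    rw [← Finset.sum_add_distrib]
    exact Finset.sum_congr rfl fun y _ => key y
  have hterm : ∀ y ∈ Finset.univ, 0 ≤ pt y * ‖w y - v y‖ ^ 2 :=
    fun y _ => mul_nonneg (hptnn y) (sq_nonneg _)
  constructor
  · rw [total]
    have := Finset.sum_nonneg hterm
    linarith
  · rw [total]
    constructor
    · intro h y hy
      have hsum0 : ∑ y, pt y * ‖w y - v y‖ ^ 2 = 0 := by linarith
      have := (Finset.sum_eq_zero_iff_of_nonneg hterm).mp hsum0 y (Finset.mem_univ y)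
      rcases mul_eq_zero.mp this with h' | h'
      · exact absurd h' hy
      · have : ‖w y - v y‖ = 0 := by
          have := sq_eq_zero_iff.mp h'; simpa using this
        have := norm_eq_zero.mp this
        exact sub_eq_zero.mp this
    · intro h
      have : ∑ y, pt y * ‖w y - v y‖ ^ 2 = 0 := by
        refine Finset.sum_eq_zero fun y _ => ?_
        by_cases hy : pt y = 0
        · rw [hy, zero_mul]
        · rw [h y hy, sub_self]; simp
      linarith
end

section
/- Flow matching gradient equivalence (discrete version): With X, Y finite, p : X → ℝ≥0 a pmf, q : X → Y → ℝ≥0 conditional pmfs, u : X → Y → ℝ^d, p_t(y) = ∑ x, q x y * p x, and v(y) = p_t(y)⁻¹ • ∑ x, (q x y * p x) • u x y for p_t(y) ≠ 0, the tractable objective L_CFM(w) = ∑ y ∑ x (p x * q x y) * ‖w y - u x y‖² and the marginal objective L_FM(w) = ∑ y with p_t(y)≠0, p_t(y) * ‖w y - v y‖² differ by a constant independent of w: L_CFM(w) = L_FM(w) + C where C = ∑ y ∑ x (p x * q x y) * ‖u x y‖² - ∑ y with p_t(y)≠0, p_t(y) * ‖v y‖². -/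
open scoped BigOperators NNReal

theorem fm_cfm_constant_gap {d : ℕ} {X Y : Type*} [Fintype X] [Fintype Y]
    (p : X → ℝ≥0) (hp : ∑ x, p x = 1)
    (q : X → Y → ℝ≥0) (hq : ∀ x, ∑ y, q x y = 1)
    (u : X → Y → EuclideanSpace ℝ (Fin d))
    (pt : Y → ℝ) (hpt : ∀ y, pt y = ∑ x, ((q x y * p x : ℝ≥0) : ℝ))
    (v : Y → EuclideanSpace ℝ (Fin d))
    (hv : ∀ y, pt y ≠ 0 →
      v y = (pt y)⁻¹ • ∑ x, ((q x y * p x : ℝ≥0) : ℝ) • u x y) :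
    ∃ C : ℝ,
      C = ∑ y, ∑ x, ((p x * q x y : ℝ≥0) : ℝ) * ‖u x y‖ ^ 2 -
            ∑ y ∈ Finset.univ.filter (fun y => pt y ≠ 0), pt y * ‖v y‖ ^ 2 ∧
      ∀ w : Y → EuclideanSpace ℝ (Fin d),
        ∑ y, ∑ x, ((p x * q x y : ℝ≥0) : ℝ) * ‖w y - u x y‖ ^ 2 =
          (∑ y ∈ Finset.univ.filter (fun y => pt y ≠ 0), pt y * ‖w y - v y‖ ^ 2) + C := by
  refine ⟨_, rfl, fun w => ?_⟩
  rw [Finset.sum_filter, Finset.sum_filter]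
  have key : ∀ y : Y,
      ∑ x, ((p x * q x y : ℝ≥0) : ℝ) * ‖w y - u x y‖ ^ 2 =
        (if pt y ≠ 0 then pt y * ‖w y - v y‖ ^ 2 else 0) +
        (∑ x, ((p x * q x y : ℝ≥0) : ℝ) * ‖u x y‖ ^ 2 -
          (if pt y ≠ 0 then pt y * ‖v y‖ ^ 2 else 0)) := by
    intro y
    set c : X → ℝ := fun x => ((p x * q x y : ℝ≥0) : ℝ) with hc
    have hcq : ∀ x, c x = ((q x y * p x : ℝ≥0) : ℝ) := by
      intro x; simp [hc, mul_comm]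
    have hsum : ∑ x, c x = pt y := by
      rw [hpt]; exact Finset.sum_congr rfl fun x _ => hcq x
    by_cases h : pt y = 0
    · have hc0 : ∀ x ∈ Finset.univ, c x = 0 := by
        have := (Finset.sum_eq_zero_iff_of_nonneg
          (fun x _ => by positivity)).mp (hsum.trans h)
        exact this
      have hz : ∀ x : X, ((p x * q x y : ℝ≥0) : ℝ) = 0 :=
        fun x => hc0 x (Finset.mem_univ x)
      simp [h, hz]
    · simp only [h, ne_eq, not_false_eq_true, if_true]
      have hS : ∑ x, c x • u x y = pt y • v y := by
        rw [hv y h, smul_smul, mul_inv_cancel₀ h, one_smul]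
        exact Finset.sum_congr rfl fun x _ => by rw [hcq]
      have expand : ∀ a b : EuclideanSpace ℝ (Fin d),
          ‖a - b‖ ^ 2 = ‖a‖ ^ 2 - 2 * inner ℝ a b + ‖b‖ ^ 2 :=
        fun a b => norm_sub_sq_real a b
      have lhs_eq : ∑ x, c x * ‖w y - u x y‖ ^ 2 =
          pt y * ‖w y‖ ^ 2 - 2 * (pt y * inner ℝ (w y) (v y)) +
            ∑ x, c x * ‖u x y‖ ^ 2 := by
        have : ∑ x, c x * ‖w y - u x y‖ ^ 2 =
            ∑ x, (c x * ‖w y‖ ^ 2 - 2 * (c x * inner ℝ (w y) (u x y))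
              + c x * ‖u x y‖ ^ 2) := by
          refine Finset.sum_congr rfl fun x _ => ?_
          rw [expand]; ring
        rw [this]
        rw [Finset.sum_add_distrib, Finset.sum_sub_distrib,
          ← Finset.sum_mul, hsum, ← Finset.mul_sum]
        congr 2
        have : ∑ x, c x * inner ℝ (w y) (u x y) =
            (inner ℝ (w y) (∑ x, c x • u x y) : ℝ) := by
          rw [inner_sum]
          exact Finset.sum_congr rfl fun x _ => (real_inner_smul_right _ _ _).symm
        rw [this, hS, real_inner_smul_right]
      rw [lhs_eq, expand]
      ring
  rw [Finset.sum_congr rfl fun y _ => key y, Finset.sum_add_distrib,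
    Finset.sum_sub_distrib]
end

section
/- Discrete version of Theorem 2 (gradient equivalence): Let X, Y be finite, θ ∈ ℝ, p : ℝ → X → ℝ differentiable pmfs with p(θ)(x) > 0, q : X → Y → ℝ≥0 fixed conditional pmfs, u : X → Y → ℝ^d fixed conditional fields, and U : Y → ℝ^d a fixed (θ-free) field. Define p_t(θ)(y) = ∑ x, q x y * p(θ)(x) and v(θ)(y) = p_t(θ)(y)⁻¹ • ∑ x (q x y * p(θ)(x)) • u x y (assume p_t(θ)(y) > 0 for all y, θ). Then ∑ y, p_t(θ₀)(y) * ⟪-2(U y - v(θ₀)(y)), d/dθ v(θ)(y)|_{θ₀}⟫ = d/dθ [∑ x ∑ y (p(θ)(x) q x y) * 2⟪U y - v(θ₀)(y), v(θ₀)(y) - u x y⟫]|_{θ=θ₀}. -/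
open scoped BigOperators NNReal RealInnerProductSpace

theorem fgm_gradient_equivalence {d : ℕ} {X Y : Type*} [Fintype X] [Fintype Y]
    (p : ℝ → X → ℝ)
    (hp : ∀ x, Differentiable ℝ (fun θ => p θ x))
    (hppos : ∀ θ x, 0 < p θ x)
    (hpsum : ∀ θ, ∑ x, p θ x = 1)
    (q : X → Y → ℝ≥0) (hq : ∀ x, ∑ y, q x y = 1)
    (u : X → Y → EuclideanSpace ℝ (Fin d))
    (U : Y → EuclideanSpace ℝ (Fin d))
    (pt : ℝ → Y → ℝ) (hpt : ∀ θ y, pt θ y = ∑ x, (q x y : ℝ) * p θ x)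
    (hptpos : ∀ θ y, 0 < pt θ y)
    (v : ℝ → Y → EuclideanSpace ℝ (Fin d))
    (hv : ∀ θ y, v θ y = (pt θ y)⁻¹ • ∑ x, ((q x y : ℝ) * p θ x) • u x y)
    (θ₀ : ℝ) :
    ∑ y, pt θ₀ y * ⟪(-2 : ℝ) • (U y - v θ₀ y), deriv (fun θ => v θ y) θ₀⟫ =
      deriv (fun θ => ∑ x, ∑ y, (p θ x * (q x y : ℝ)) *
        (2 * ⟪U y - v θ₀ y, v θ₀ y - u x y⟫)) θ₀ := by
  -- differentiability of pt
  have hptdiff : ∀ y, Differentiable ℝ (fun θ => pt θ y) := by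
    intro y
    have : (fun θ => pt θ y) = fun θ => ∑ x, (q x y : ℝ) * p θ x := by
      funext θ; exact hpt θ y
    rw [this]
    exact Differentiable.fun_sum fun x _ => (hp x).const_mul _
  -- differentiability of v
  have hvdiff : ∀ y, Differentiable ℝ (fun θ => v θ y) := by
    intro y
    have : (fun θ => v θ y) =
        fun θ => (pt θ y)⁻¹ • ∑ x, ((q x y : ℝ) * p θ x) • u x y := by
      funext θ; exact hv θ y
    rw [this]
    exact Differentiable.smul ((hptdiff y).inv fun θ => (hptpos θ y).ne')
      (Differentiable.fun_sum fun x _ => ((hp x).const_mul _).smul_const _)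
  -- pt • v = sum
  have hptv : ∀ θ y, pt θ y • v θ y = ∑ x, ((q x y : ℝ) * p θ x) • u x y := by
    intro θ y
    rw [hv θ y, smul_smul, mul_inv_cancel₀ (hptpos θ y).ne', one_smul]
  -- rewrite the function inside the derivative
  have hfun : (fun θ => ∑ x, ∑ y, (p θ x * (q x y : ℝ)) *
        (2 * ⟪U y - v θ₀ y, v θ₀ y - u x y⟫)) =
      fun θ => ∑ y, (2 * pt θ y) * ⟪U y - v θ₀ y, v θ₀ y - v θ y⟫ := by
    funext θ
    rw [Finset.sum_comm]
    refine Finset.sum_congr rfl fun y _ => ?_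
    have h1 : ∀ x : X, (p θ x * (q x y : ℝ)) * (2 * ⟪U y - v θ₀ y, v θ₀ y - u x y⟫)
        = 2 * ⟪U y - v θ₀ y, ((q x y : ℝ) * p θ x) • (v θ₀ y - u x y)⟫ := by
      intro x
      rw [real_inner_smul_right]; ring
    rw [Finset.sum_congr rfl fun x _ => h1 x, ← Finset.mul_sum, ← inner_sum]
    have h2 : (∑ x, ((q x y : ℝ) * p θ x) • (v θ₀ y - u x y))
        = pt θ y • (v θ₀ y - v θ y) := by
      simp only [smul_sub, Finset.sum_sub_distrib, ← Finset.sum_smul, ← hpt θ y,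
        hptv θ y]
    rw [h2, real_inner_smul_right]; ring
  rw [hfun]
  -- compute the derivative termwise
  have hderiv : ∀ y : Y, HasDerivAt
      (fun θ => (2 * pt θ y) * ⟪U y - v θ₀ y, v θ₀ y - v θ y⟫)
      (pt θ₀ y * ⟪(-2 : ℝ) • (U y - v θ₀ y), deriv (fun θ => v θ y) θ₀⟫) θ₀ := by
    intro y
    have hvd : HasDerivAt (fun θ => v θ y) (deriv (fun θ => v θ y) θ₀) θ₀ :=
      ((hvdiff y) θ₀).hasDerivAt
    have hG : HasDerivAt (fun θ => ⟪U y - v θ₀ y, v θ₀ y - v θ y⟫)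
        (⟪U y - v θ₀ y, -(deriv (fun θ => v θ y) θ₀)⟫) θ₀ := by
      have h := HasDerivAt.inner ℝ (hasDerivAt_const θ₀ (U y - v θ₀ y))
        ((hasDerivAt_const θ₀ (v θ₀ y)).sub hvd)
      simpa using h
    have hF : HasDerivAt (fun θ => 2 * pt θ y)
        (2 * deriv (fun θ => pt θ y) θ₀) θ₀ :=
      (((hptdiff y) θ₀).hasDerivAt).const_mul 2
    have := hF.mul hG
    have hG0 : ⟪U y - v θ₀ y, v θ₀ y - v θ₀ y⟫ = (0 : ℝ) := by simp
    rw [hG0, mul_zero, zero_add] at this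
    refine HasDerivAt.congr_deriv this ?_
    rw [real_inner_smul_left, inner_neg_right]; ring
  rw [(HasDerivAt.fun_sum fun y _ => hderiv y).deriv]
end
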